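/- Fix r ∈ (0,1) and let ε > 0 be small enough that b_L := σ_ω/r - ε > σ_ω. Consider two GenAI models with constant biases b_L and b_H := σ_ω/r + ε. A rational agent never delegates to either model (since b_L², b_H² > σ_ω²). The biased agent with parameter r never delegates with model b_H (since r·b_H > σ_ω), but delegates with positive probability with model b_L (since r·b_L < σ_ω), and every such delegation yields true payoff -b_L² < -σ_ω², strictly worse than the default action. Hence the biased agent's expected welfare is strictly lower with the less-biased model b_L than with the more-biased model b_H. -/

import Mathlib

open MeasureTheory Classical in
/-- Fix r ∈ (0,1) and ε > 0 with b_L := σω/r - ε > σω, b_H := σω/r + ε.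
A rational agent never delegates to either model; the biased agent never
delegates with model b_H but delegates with positive probability with model
b_L, each such delegation yielding true payoff -b_L² < -σω².  Hence the
biased agent's expected welfare is strictly lower with the less-biased
model b_L than with the more-biased model b_H. -/
theorem stmt7 (μ : Measure ℝ) [IsProbabilityMeasure μ] (σω r ε : ℝ)
    (hσ : 0 < σω) (hr0 : 0 < r) (hr1 : r < 1) (hε : 0 < ε)
    (hL : σω < σω / r - ε)
    (hpos : μ {c | c ≤ 0} = 0)
    (hsupp : ∀ x : ℝ, 0 ≤ x → 0 < μ (Set.Ioi x)) :
    letI bL : ℝ := σω / r - ε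
    letI bH : ℝ := σω / r + ε
    letI W : ℝ → ℝ := fun b => ∫ c,
      (if r ^ 2 * b ^ 2 < σω ^ 2 ∧ r ^ 2 * b ^ 2 < c then -b ^ 2
       else if c < min (r ^ 2 * b ^ 2) (σω ^ 2) then -c else -σω ^ 2) ∂μ
    (¬ (1 : ℝ) ^ 2 * bL ^ 2 < σω ^ 2) ∧
    (¬ (1 : ℝ) ^ 2 * bH ^ 2 < σω ^ 2) ∧
    (¬ r ^ 2 * bH ^ 2 < σω ^ 2) ∧
    (r ^ 2 * bL ^ 2 < σω ^ 2) ∧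
    (0 < μ (Set.Ioi (r ^ 2 * bL ^ 2))) ∧
    (-bL ^ 2 < -σω ^ 2) ∧
    W bL < W bH := by
  have hL' : σω < σω / r - ε := hL
  set bL : ℝ := σω / r - ε with hbLdef
  set bH : ℝ := σω / r + ε with hbHdef
  have hrbL : r * bL = σω - r * ε := by rw [hbLdef]; field_simp
  have hrbH : r * bH = σω + r * ε := by rw [hbHdef]; field_simp <;> ring
  have hbLσ : σω < bL := hL
  have hbHσ : σω < bH := by rw [hbHdef]; rw [hbLdef] at hL'; linarith
  have hbLpos : 0 < bL := lt_trans hσ hbLσ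
  have hbHpos : 0 < bH := lt_trans hσ hbHσ
  have hrbLpos : 0 < r * bL := mul_pos hr0 hbLpos
  have hrbLlt : r * bL < σω := by rw [hrbL]; nlinarith
  have fact1 : ¬ (1 : ℝ) ^ 2 * bL ^ 2 < σω ^ 2 := by nlinarith
  have fact2 : ¬ (1 : ℝ) ^ 2 * bH ^ 2 < σω ^ 2 := by nlinarith
  have fact3 : ¬ r ^ 2 * bH ^ 2 < σω ^ 2 := by
    have h : r ^ 2 * bH ^ 2 = (r * bH) ^ 2 := by ring
    rw [h, hrbH]; nlinarith
  have fact4 : r ^ 2 * bL ^ 2 < σω ^ 2 := by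
    have h : r ^ 2 * bL ^ 2 = (r * bL) ^ 2 := by ring
    rw [h]; nlinarith
  have fact6 : -bL ^ 2 < -σω ^ 2 := by nlinarith
  have htpos : (0:ℝ) ≤ r ^ 2 * bL ^ 2 := by positivity
  have fact5 : 0 < μ (Set.Ioi (r ^ 2 * bL ^ 2)) := hsupp _ htpos
  refine ⟨fact1, fact2, fact3, fact4, fact5, fact6, ?_⟩
  set f : ℝ → ℝ := fun c =>
    if r ^ 2 * bL ^ 2 < σω ^ 2 ∧ r ^ 2 * bL ^ 2 < c then -bL ^ 2
    else if c < min (r ^ 2 * bL ^ 2) (σω ^ 2) then -c else -σω ^ 2 with hfdef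
  set g : ℝ → ℝ := fun c =>
    if r ^ 2 * bH ^ 2 < σω ^ 2 ∧ r ^ 2 * bH ^ 2 < c then -bH ^ 2
    else if c < min (r ^ 2 * bH ^ 2) (σω ^ 2) then -c else -σω ^ 2 with hgdef
  show (∫ c, f c ∂μ) < ∫ c, g c ∂μ
  have hfm : Measurable f := by
    apply Measurable.ite
    · exact (MeasurableSet.const _).inter measurableSet_Ioi
    · exact measurable_const
    · exact Measurable.ite measurableSet_Iio measurable_neg measurable_const
  have hgm : Measurable g := by
    apply Measurable.ite
    · exact (MeasurableSet.const _).inter measurableSet_Ioi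
    · exact measurable_const
    · exact Measurable.ite measurableSet_Iio measurable_neg measurable_const
  have h0 : ∀ᵐ c ∂μ, 0 < c := by
    rw [ae_iff]
    convert hpos using 2
    ext c; simp [not_lt]
  have hbound : ∀ (F : ℝ → ℝ), Measurable F →
      (∀ c, 0 < c → ‖F c‖ ≤ max (bL ^ 2) (σω ^ 2)) → Integrable F μ := by
    intro F hFm hF
    refine (integrable_const (max (bL ^ 2) (σω ^ 2))).mono' hFm.aestronglyMeasurable ?_
    filter_upwards [h0] with c hc using hF c hc
  have hσbL : σω ^ 2 < bL ^ 2 := by nlinarith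
  have hfi : Integrable f μ := by
    refine hbound f hfm ?_
    intro c hc
    simp only [hfdef]
    split_ifs with h1 h2
    · rw [norm_neg, Real.norm_eq_abs, abs_of_nonneg (by positivity)]
      exact le_max_left _ _
    · rw [Real.norm_eq_abs, abs_of_nonpos (by linarith), neg_neg]
      have : c < σω ^ 2 := lt_of_lt_of_le h2 (min_le_right _ _)
      exact le_trans (le_of_lt this) (le_max_right _ _)
    · rw [norm_neg, Real.norm_eq_abs, abs_of_nonneg (by positivity)]
      exact le_max_right _ _
  have hgi : Integrable g μ := by
    refine hbound g hgm ?_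
    intro c hc
    simp only [hgdef]
    split_ifs with h1 h2
    · exact absurd h1.1 fact3
    · rw [Real.norm_eq_abs, abs_of_nonpos (by linarith), neg_neg]
      have : c < σω ^ 2 := lt_of_lt_of_le h2 (min_le_right _ _)
      exact le_trans (le_of_lt this) (le_max_right _ _)
    · rw [norm_neg, Real.norm_eq_abs, abs_of_nonneg (by positivity)]
      exact le_max_right _ _
  have hg1 : ∀ c : ℝ, ¬(r ^ 2 * bH ^ 2 < σω ^ 2 ∧ r ^ 2 * bH ^ 2 < c) :=
    fun c h => fact3 h.1
  have hfg : ∀ c, f c ≤ g c := by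
    intro c
    simp only [hfdef, hgdef]
    rw [if_neg (hg1 c)]
    by_cases h1 : r ^ 2 * bL ^ 2 < σω ^ 2 ∧ r ^ 2 * bL ^ 2 < c
    · rw [if_pos h1]
      by_cases h2 : c < min (r ^ 2 * bH ^ 2) (σω ^ 2)
      · rw [if_pos h2]
        have : c < σω ^ 2 := lt_of_lt_of_le h2 (min_le_right _ _)
        linarith
      · rw [if_neg h2]; linarith
    · rw [if_neg h1]
      by_cases h2 : c < min (r ^ 2 * bL ^ 2) (σω ^ 2)
      · have hcσ : c < σω ^ 2 := lt_of_lt_of_le h2 (min_le_right _ _)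
        have h2' : c < min (r ^ 2 * bH ^ 2) (σω ^ 2) :=
          lt_min (lt_of_lt_of_le hcσ (not_lt.mp fact3)) hcσ
        rw [if_pos h2, if_pos h2']
      · rw [if_neg h2]
        by_cases h3 : c < min (r ^ 2 * bH ^ 2) (σω ^ 2)
        · rw [if_pos h3]
          have : c < σω ^ 2 := lt_of_lt_of_le h3 (min_le_right _ _)
          linarith
        · rw [if_neg h3]
  have hlow : ∀ c ∈ Set.Ioi (r ^ 2 * bL ^ 2), bL ^ 2 - σω ^ 2 ≤ g c - f c := by
    intro c hc
    rw [Set.mem_Ioi] at hc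
    have hf1 : r ^ 2 * bL ^ 2 < σω ^ 2 ∧ r ^ 2 * bL ^ 2 < c := ⟨fact4, hc⟩
    simp only [hfdef, hgdef]
    rw [if_neg (hg1 c), if_pos hf1]
    by_cases h2 : c < min (r ^ 2 * bH ^ 2) (σω ^ 2)
    · rw [if_pos h2]
      have : c < σω ^ 2 := lt_of_lt_of_le h2 (min_le_right _ _)
      linarith
    · rw [if_neg h2]; linarith
  have hdiffint : Integrable (fun c => g c - f c) μ := hgi.sub hfi
  have hmono : ∫ c in Set.Ioi (r ^ 2 * bL ^ 2), (g c - f c) ∂μ ≤ ∫ c, (g c - f c) ∂μ :=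
    integral_mono_measure Measure.restrict_le_self
      (ae_of_all _ fun c => sub_nonneg.2 (hfg c)) hdiffint
  have hconst : (bL ^ 2 - σω ^ 2) * (μ (Set.Ioi (r ^ 2 * bL ^ 2))).toReal
      ≤ ∫ c in Set.Ioi (r ^ 2 * bL ^ 2), (g c - f c) ∂μ := by
    have hc1 : ∫ _ in Set.Ioi (r ^ 2 * bL ^ 2), (bL ^ 2 - σω ^ 2) ∂μ
        = (bL ^ 2 - σω ^ 2) * (μ (Set.Ioi (r ^ 2 * bL ^ 2))).toReal := by
      rw [setIntegral_const, smul_eq_mul, mul_comm]; rfl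
    rw [← hc1]
    exact setIntegral_mono_on (integrable_const _).integrableOn
      hdiffint.integrableOn measurableSet_Ioi hlow
  have htoReal : 0 < (μ (Set.Ioi (r ^ 2 * bL ^ 2))).toReal :=
    ENNReal.toReal_pos (ne_of_gt fact5) (measure_ne_top μ _)
  have hkey : 0 < ∫ c, (g c - f c) ∂μ := by
    have : 0 < (bL ^ 2 - σω ^ 2) * (μ (Set.Ioi (r ^ 2 * bL ^ 2))).toReal :=
      mul_pos (by linarith) htoReal
    linarith
  have hsub := integral_sub hgi hfi
  rw [hsub] at hkey
  linarith
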